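/- Let $M$ be a connected polymatroid, $e, f$ distinct elements of $E(M)$, and $\{\alpha, \beta\} = \{\text{delete}, \text{contract}\} = \{\gamma, \delta\}$ (as single-element removal operations). Assume $M\alpha e$ and $M\alpha e\,\gamma f$ are connected. Then either (i) $M\gamma f$ is connected and $M\alpha e\,\gamma f = M\gamma f\,\alpha e$; or (ii) $M\gamma f$ is disconnected, $M \alpha e\,\gamma f = M\beta e\,\gamma f$, and one of the following holds: (a) $M\beta e$ is connected; (b) $M\beta e$ is disconnected, $M\alpha e\,\gamma f = M\delta f\,\beta e$, and $M\delta f$ is connected; (c) $M\beta e$ and $M\delta f$ are both disconnected and $M\alpha e\,\gamma f = M\alpha e\,\delta f$. -/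

import Mathlib

/-- Connectivity of a polymatroid with rank function `r` and ground set `F`. -/
def Conn {α : Type*} [DecidableEq α] (r : Finset α → ℤ) (F : Finset α) : Prop :=
  ∀ X ⊆ F, X ≠ ∅ → X ≠ F → r X + r (F \ X) ≠ r F

/-- The rank function after removing `e`: deletion if `b = true`, contraction otherwise. -/
def rmOp {α : Type*} [DecidableEq α] (b : Bool) (r : Finset α → ℤ) (e : α) :
    Finset α → ℤ :=
  if b then r else fun X => r (X ∪ {e}) - r {e}

section Aux

variable {α : Type*} [DecidableEq α]

lemma conn_congr (q₁ q₂ : Finset α → ℤ) (F : Finset α)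
    (h : ∀ X ⊆ F, q₁ X = q₂ X) (hc : Conn q₁ F) : Conn q₂ F := by
  intro X hX h1 h2
  rw [← h X hX, ← h (F \ X) Finset.sdiff_subset, ← h F (Finset.Subset.refl F)]
  exact hc X hX h1 h2

lemma rmOp_zero (p : Bool) (r : Finset α → ℤ) (e : α) (hr0 : r ∅ = 0) :
    rmOp p r e ∅ = 0 := by
  cases p <;> simp [rmOp, hr0]

lemma rmOp_submod (p : Bool) (r : Finset α → ℤ) (e : α)
    (hsub : ∀ X Y : Finset α, r (X ∪ Y) + r (X ∩ Y) ≤ r X + r Y) :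
    ∀ X Y : Finset α,
      rmOp p r e (X ∪ Y) + rmOp p r e (X ∩ Y) ≤ rmOp p r e X + rmOp p r e Y := by
  cases p
  · intro X Y
    simp only [rmOp, Bool.false_eq_true, if_false]
    have h := hsub (X ∪ {e}) (Y ∪ {e})
    have h1 : (X ∪ {e}) ∪ (Y ∪ {e}) = (X ∪ Y) ∪ {e} := by ext z; simp
    have h2 : (X ∪ {e}) ∩ (Y ∪ {e}) = (X ∩ Y) ∪ {e} := by ext z; simp; tauto
    rw [h1, h2] at h
    linarith
  · intro X Y
    simpa [rmOp] using hsub X Y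

lemma rmOp_comm (r : Finset α → ℤ) (a c : Bool) (e f : α) (X : Finset α) :
    rmOp c (rmOp a r e) f X = rmOp a (rmOp c r f) e X := by
  cases a <;> cases c <;> simp only [rmOp, Bool.false_eq_true, if_false, if_true]
  have h1 : (X ∪ {f}) ∪ {e} = (X ∪ {e}) ∪ {f} := by ext z; simp; tauto
  have h2 : ({f} : Finset α) ∪ {e} = {e} ∪ {f} := by ext z; simp; tauto
  rw [h1, h2]
  ring

/-- Modularity across a separation. -/
lemma modular (q : Finset α → ℤ) (hq0 : q ∅ = 0)
    (hsub : ∀ X Y : Finset α, q (X ∪ Y) + q (X ∩ Y) ≤ q X + q Y)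
    (Z W : Finset α) (hd : ∀ z, z ∈ Z → z ∈ W → False)
    (hsep : q Z + q W = q (Z ∪ W)) :
    ∀ A ⊆ Z, ∀ B ⊆ W, q (A ∪ B) = q A + q B := by
  intro A hA B hB
  have hAz : ∀ z, z ∈ A → z ∈ Z := fun z h => hA h
  have hBw : ∀ z, z ∈ B → z ∈ W := fun z h => hB h
  have e1 : Z ∪ (A ∪ W) = Z ∪ W := by ext z; simp; have := hAz z; tauto
  have e2 : Z ∩ (A ∪ W) = A := by
    ext z; simp; have h1 := hAz z; have h2 := hd z; tauto
  have e3 : (A ∪ B) ∪ W = A ∪ W := by ext z; simp; have := hBw z; tauto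
  have e4 : (A ∪ B) ∩ W = B := by
    ext z; simp; have h1 := hBw z; have h2 := hd z; have h3 := hAz z; tauto
  have e5 : A ∩ B = ∅ := by
    ext z; simp; intro h1 h2; exact hd z (hAz z h1) (hBw z h2)
  have s1 := hsub Z (A ∪ W); rw [e1, e2] at s1
  have s2 := hsub (A ∪ B) W; rw [e3, e4] at s2
  have s3 := hsub A B; rw [e5, hq0] at s3
  linarith

/-- Key lemma: if `q` is disconnected on `F` but removing `x` (in either way)
yields a connected structure, then `{x}` is a separator of `q`, hence both
removal operations at `x` agree with `q` on subsets of `F \ {x}`. -/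
lemma key (q : Finset α → ℤ) (hq0 : q ∅ = 0)
    (hsub : ∀ X Y : Finset α, q (X ∪ Y) + q (X ∩ Y) ≤ q X + q Y)
    (F : Finset α) (x : α) (hx : x ∈ F)
    (hdis : ¬ Conn q F) (p : Bool)
    (hconn : Conn (rmOp p q x) (F \ {x})) :
    ∀ p' : Bool, ∀ X ⊆ F \ {x}, rmOp p' q x X = q X := by
  simp only [Conn] at hdis
  push_neg at hdis
  obtain ⟨Z0, hZ0F, hZ0ne, hZ0nF, hZ0eq⟩ := hdis
  obtain ⟨Z, hZF, hxZ, hWne, hZeq⟩ :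
      ∃ Z, Z ⊆ F ∧ x ∈ Z ∧ (F \ Z).Nonempty ∧ q Z + q (F \ Z) = q F := by
    by_cases hxZ0 : x ∈ Z0
    · refine ⟨Z0, hZ0F, hxZ0, ?_, hZ0eq⟩
      rw [Finset.nonempty_iff_ne_empty]
      intro h
      exact hZ0nF (Finset.Subset.antisymm hZ0F (Finset.sdiff_eq_empty_iff_subset.1 h))
    · refine ⟨F \ Z0, Finset.sdiff_subset, Finset.mem_sdiff.2 ⟨hx, hxZ0⟩, ?_, ?_⟩
      · rw [Finset.sdiff_sdiff_eq_self hZ0F, Finset.nonempty_iff_ne_empty]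
        exact hZ0ne.ne_empty
      · rw [Finset.sdiff_sdiff_eq_self hZ0F]; linarith
  have hd : ∀ z, z ∈ Z → z ∈ F \ Z → False := fun z hz hw => (Finset.mem_sdiff.1 hw).2 hz
  have mod := modular q hq0 hsub Z (F \ Z) hd
    (by rw [Finset.union_sdiff_of_subset hZF]; exact hZeq)
  have hZx : Z = {x} := by
    by_contra hZne1
    have hne' : (Z \ {x}).Nonempty := by
      rw [Finset.sdiff_nonempty]
      intro hsub1
      exact hZne1 (Finset.Subset.antisymm hsub1 (Finset.singleton_subset_iff.2 hxZ))
    have hWid : (F \ {x}) \ (Z \ {x}) = F \ Z := by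
      ext z
      simp only [Finset.mem_sdiff, Finset.mem_singleton, not_and, not_not]
      constructor
      · rintro ⟨⟨hzF, hzx⟩, h⟩
        refine ⟨hzF, fun hzZ => hzx (h hzZ)⟩
      · rintro ⟨hzF, hzZ⟩
        exact ⟨⟨hzF, fun h => hzZ (h ▸ hxZ)⟩, fun h => absurd h hzZ⟩
    refine (hconn (Z \ {x})
      (Finset.sdiff_subset_sdiff hZF (Finset.Subset.refl _))
      (Finset.nonempty_iff_ne_empty.1 hne') ?_) ?_
    · intro h
      have h2 := hWid
      rw [h, Finset.sdiff_self] at h2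
      rw [← h2] at hWne
      exact Finset.not_nonempty_empty hWne
    · rw [hWid]
      cases p
      · -- contraction
        simp only [rmOp, Bool.false_eq_true, if_false]
        have e1 : (Z \ {x}) ∪ {x} = Z := by
          ext z; simp
          rintro rfl; exact hxZ
        have e2 : (F \ {x}) ∪ {x} = F := by
          ext z; simp
          rintro rfl; exact hx
        have e3 : (F \ Z) ∪ {x} = {x} ∪ (F \ Z) := Finset.union_comm _ _
        have hm := mod {x} (Finset.singleton_subset_iff.2 hxZ) (F \ Z) (Finset.Subset.refl _)
        rw [e1, e2, e3, hm]
        linarith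
      · -- deletion
        simp only [rmOp, if_true]
        have hm := mod (Z \ {x}) Finset.sdiff_subset (F \ Z) (Finset.Subset.refl _)
        have e1 : (Z \ {x}) ∪ (F \ Z) = F \ {x} := by
          ext z
          simp only [Finset.mem_union, Finset.mem_sdiff, Finset.mem_singleton]
          constructor
          · rintro (⟨h1, h2⟩ | ⟨h1, h2⟩)
            · exact ⟨hZF h1, h2⟩
            · exact ⟨h1, fun hzx => h2 (hzx ▸ hxZ)⟩
          · rintro ⟨h1, h2⟩
            by_cases hzZ : z ∈ Z
            · exact Or.inl ⟨hzZ, h2⟩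
            · exact Or.inr ⟨h1, hzZ⟩
        rw [e1] at hm
        linarith
  subst hZx
  intro p' X hX
  cases p'
  · simp only [rmOp, Bool.false_eq_true, if_false]
    have hm := mod {x} (Finset.Subset.refl _) X hX
    rw [Finset.union_comm X {x}, hm]
    ring
  · simp [rmOp]

end Aux

/-- Case analysis on removing two elements from a connected polymatroid while
maintaining connectivity. Here α,β are complementary operations, as are γ,δ. -/
theorem two_removals {α : Type*} [DecidableEq α]
    (E : Finset α) (r : Finset α → ℤ)
    (hr0 : r ∅ = 0)
    (hmono : ∀ X Y : Finset α, X ⊆ Y → r X ≤ r Y)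
    (hsub : ∀ X Y : Finset α, r (X ∪ Y) + r (X ∩ Y) ≤ r X + r Y)
    (hconn : Conn r E)
    (e f : α) (he : e ∈ E) (hf : f ∈ E) (hef : e ≠ f)
    (a b c d : Bool) (hab : b = !a) (hcd : d = !c)
    (h1 : Conn (rmOp a r e) (E \ {e}))
    (h2 : Conn (rmOp c (rmOp a r e) f) ((E \ {e}) \ {f})) :
    (Conn (rmOp c r f) (E \ {f}) ∧
      ∀ X ⊆ (E \ {e}) \ {f},
        rmOp c (rmOp a r e) f X = rmOp a (rmOp c r f) e X) ∨
    (¬ Conn (rmOp c r f) (E \ {f}) ∧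
      (∀ X ⊆ (E \ {e}) \ {f},
        rmOp c (rmOp a r e) f X = rmOp c (rmOp b r e) f X) ∧
      (Conn (rmOp b r e) (E \ {e}) ∨
       (¬ Conn (rmOp b r e) (E \ {e}) ∧
         (∀ X ⊆ (E \ {e}) \ {f},
           rmOp c (rmOp a r e) f X = rmOp b (rmOp d r f) e X) ∧
         Conn (rmOp d r f) (E \ {f})) ∨
       (¬ Conn (rmOp b r e) (E \ {e}) ∧ ¬ Conn (rmOp d r f) (E \ {f}) ∧
         (∀ X ⊆ (E \ {e}) \ {f},
           rmOp c (rmOp a r e) f X = rmOp d (rmOp a r e) f X)))) := by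
  have he' : e ∈ E \ ({f} : Finset α) := Finset.mem_sdiff.2 ⟨he, by simpa using hef⟩
  have hf' : f ∈ E \ ({e} : Finset α) :=
    Finset.mem_sdiff.2 ⟨hf, by simpa using hef.symm⟩
  have hGG : (E \ {f}) \ {e} = (E \ {e}) \ {f} := by ext z; simp; tauto
  have hr'0 := rmOp_zero c r f hr0
  have hr'sub := rmOp_submod c r f hsub
  have hs0 := rmOp_zero b r e hr0
  have hssub := rmOp_submod b r e hsub
  have hr''0 := rmOp_zero d r f hr0
  have hr''sub := rmOp_submod d r f hsub
  by_cases hC : Conn (rmOp c r f) (E \ {f})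
  · exact Or.inl ⟨hC, fun X _ => rmOp_comm r a c e f X⟩
  · have hconn1 : Conn (rmOp a (rmOp c r f) e) ((E \ {f}) \ {e}) := by
      rw [hGG]
      exact conn_congr _ _ _ (fun X _ => rmOp_comm r a c e f X) h2
    have L1 := key (rmOp c r f) hr'0 hr'sub (E \ {f}) e he' hC a hconn1
    have eq1 : ∀ X ⊆ (E \ {e}) \ {f},
        rmOp c (rmOp a r e) f X = rmOp c (rmOp b r e) f X := by
      intro X hX
      have hX' : X ⊆ (E \ {f}) \ {e} := by rw [hGG]; exact hX
      rw [rmOp_comm r a c e f X, rmOp_comm r b c e f X, L1 a X hX', L1 b X hX']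
    refine Or.inr ⟨hC, eq1, ?_⟩
    by_cases hB : Conn (rmOp b r e) (E \ {e})
    · exact Or.inl hB
    · have hconn2 : Conn (rmOp c (rmOp b r e) f) ((E \ {e}) \ {f}) :=
        conn_congr _ _ _ eq1 h2
      have L2 := key (rmOp b r e) hs0 hssub (E \ {e}) f hf' hB c hconn2
      have claimD : ∀ X ⊆ (E \ {f}) \ {e}, rmOp c r f X = rmOp b r e X := by
        intro X hX
        have hX2 : X ⊆ (E \ {e}) \ {f} := by rw [← hGG]; exact hX
        rw [← L1 b X hX, ← rmOp_comm r b c e f X, L2 c X hX2]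
      have eq2 : ∀ X ⊆ (E \ {e}) \ {f},
          rmOp c (rmOp a r e) f X = rmOp b (rmOp d r f) e X := by
        intro X hX
        have hX' : X ⊆ (E \ {f}) \ {e} := by rw [hGG]; exact hX
        rw [rmOp_comm r a c e f X, L1 a X hX', ← rmOp_comm r b d e f X, L2 d X hX,
          claimD X hX']
      by_cases hD : Conn (rmOp d r f) (E \ {f})
      · exact Or.inr (Or.inl ⟨hB, eq2, hD⟩)
      · refine Or.inr (Or.inr ⟨hB, hD, ?_⟩)
        have hconn3 : Conn (rmOp b (rmOp d r f) e) ((E \ {f}) \ {e}) := by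
          rw [hGG]
          exact conn_congr _ _ _ eq2 h2
        have L3 := key (rmOp d r f) hr''0 hr''sub (E \ {f}) e he' hD b hconn3
        intro X hX
        have hX' : X ⊆ (E \ {f}) \ {e} := by rw [hGG]; exact hX
        rw [rmOp_comm r a c e f X, rmOp_comm r a d e f X, L1 a X hX', L3 a X hX',
          ← L3 b X hX', ← rmOp_comm r b d e f X, L2 d X hX, ← claimD X hX']
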